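/- Let (X,f) be a dynamical system, where X is a compact metric space and f : X → X is continuous, and suppose there exists w ∈ X whose orbit {fⁿ(w) : n ∈ ℕ} is dense in X. If every element of the Ellis semigroup E(X,f) is continuous, then the cardinality of E(X,f)* = E(X,f) \ {fⁿ : n ∈ ℕ} is at most the cardinality of X. -/
import Mathlib


/-- Theorem 2.9 (cardinality part): If `(X,f)` has a point `w` with dense orbit and
all elements of the Ellis semigroup are continuous, then
`|E(X,f)*| = |E(X,f) \ {fⁿ : n ∈ ℕ}| ≤ |X|`. -/
theorem ellis_star_card_le {X : Type*} [MetricSpace X] [CompactSpace X]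
    (f : X → X) (hf : Continuous f)
    (w : X) (hw : Dense (Set.range fun n : ℕ => f^[n] w))
    (hcont : ∀ g ∈ closure {g : X → X | ∃ n : ℕ, g = f^[n]}, Continuous g) :
    Cardinal.mk ↥(closure {g : X → X | ∃ n : ℕ, g = f^[n]} \
      {g : X → X | ∃ n : ℕ, g = f^[n]}) ≤ Cardinal.mk X := by
  -- Every element of the closure commutes with f.
  have hcomm : ∀ g ∈ closure {g : X → X | ∃ n : ℕ, g = f^[n]},
      ∀ x, g (f x) = f (g x) := by
    intro g hg x
    have hclosed : IsClosed {g : X → X | g (f x) = f (g x)} :=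
      isClosed_eq (continuous_apply (f x)) (hf.comp (continuous_apply x))
    have hsub : {g : X → X | ∃ n : ℕ, g = f^[n]} ⊆ {g : X → X | g (f x) = f (g x)} := by
      rintro g ⟨n, rfl⟩
      simp [← Function.iterate_succ_apply, Function.iterate_succ_apply']
    exact hclosed.closure_subset_iff.mpr hsub hg
  -- g ↦ g w is injective on the closure.
  have hinj : ∀ g ∈ closure {g : X → X | ∃ n : ℕ, g = f^[n]},
      ∀ h ∈ closure {g : X → X | ∃ n : ℕ, g = f^[n]}, g w = h w → g = h := by
    intro g hg h hh hgh
    have key : ∀ g ∈ closure {g : X → X | ∃ n : ℕ, g = f^[n]}, ∀ n : ℕ,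
        g (f^[n] w) = f^[n] (g w) := by
      intro g hg n
      induction n with
      | zero => simp
      | succ k ih =>
        rw [Function.iterate_succ_apply', hcomm g hg, ih]
        exact (Function.iterate_succ_apply' f k (g w)).symm
    have : Set.EqOn g h (Set.range fun n : ℕ => f^[n] w) := by
      rintro _ ⟨n, rfl⟩
      simp only
      rw [key g hg, key h hh, hgh]
    exact (hcont g hg).ext_on hw (hcont h hh) this
  refine Cardinal.mk_le_of_injective (f := fun g : ↥(closure {g : X → X | ∃ n : ℕ, g = f^[n]} \
      {g : X → X | ∃ n : ℕ, g = f^[n]}) => g.1 w) ?_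
  rintro ⟨g, hg⟩ ⟨h, hh⟩ hgh
  exact Subtype.ext (hinj g hg.1 h hh.1 hgh)
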